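/- Let U ⊆ ℝⁿ be a bounded open set, V an open set with closure(U) ⊆ V, and f : V → ℝⁿ continuous and injective. Set H = f(U) ∩ (closure(f(U)) \ interior(f(U))). Then H is an open subset of the boundary bd(f(U)) = closure(f(U)) \ interior(f(U)) in its subspace topology. -/

import Mathlib

/-- With `U` bounded open, `closure U ⊆ V` open, `f : V → ℝⁿ` continuous injective,
the set `H = f(U) ∩ (closure (f U) \ interior (f U))` is open in the subspace topology
of the boundary `closure (f U) \ interior (f U)`. -/
theorem stmt_6 (n : ℕ) (U V : Set (Fin n → ℝ))
    (hU : IsOpen U) (hUbd : Bornology.IsBounded U)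
    (hV : IsOpen V) (hUV : closure U ⊆ V)
    (f : (Fin n → ℝ) → (Fin n → ℝ))
    (hf : ContinuousOn f V) (hinj : Set.InjOn f V) :
    IsOpen ((Subtype.val : (closure (f '' U) \ interior (f '' U) : Set (Fin n → ℝ)) →
        (Fin n → ℝ)) ⁻¹' (f '' U ∩ (closure (f '' U) \ interior (f '' U)))) := by
  have hc : IsCompact (closure U) := hUbd.isCompact_closure
  have hfc : ContinuousOn f (closure U) := hf.mono hUV
  have hinj' : Set.InjOn f (closure U) := hinj.mono hUV
  have himg : IsCompact (f '' closure U) := hc.image_of_continuousOn hfc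
  have hcl : closure (f '' U) = f '' closure U := by
    apply Set.Subset.antisymm
    · exact closure_minimal (Set.image_mono (f := f) subset_closure) himg.isClosed
    · exact hfc.image_closure
  have hfr : IsClosed (f '' frontier U) := by
    have : IsCompact (f '' frontier U) :=
      (hc.of_isClosed_subset isClosed_frontier frontier_subset_closure).image_of_continuousOn
        (hfc.mono frontier_subset_closure)
    exact this.isClosed
  have hkey : (Subtype.val : (closure (f '' U) \ interior (f '' U) : Set (Fin n → ℝ)) →
        (Fin n → ℝ)) ⁻¹' (f '' U ∩ (closure (f '' U) \ interior (f '' U))) =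
      ((Subtype.val : (closure (f '' U) \ interior (f '' U) : Set (Fin n → ℝ)) →
        (Fin n → ℝ)) ⁻¹' (f '' frontier U))ᶜ := by
    ext ⟨x, hx⟩
    simp only [Set.mem_preimage, Set.mem_compl_iff, Set.mem_inter_iff]
    constructor
    · rintro ⟨⟨u, hu, rfl⟩, -⟩ ⟨y, hy, hyx⟩
      have : y = u := hinj' (frontier_subset_closure hy) (subset_closure hu) hyx
      rw [hU.frontier_eq] at hy
      exact hy.2 (this ▸ hu)
    · intro h
      refine ⟨?_, hx⟩
      have hx1 : x ∈ f '' closure U := hcl ▸ hx.1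
      obtain ⟨y, hy, rfl⟩ := hx1
      rcases (closure_eq_interior_union_frontier U ▸ hy : y ∈ interior U ∪ frontier U) with h1 | h1
      · exact ⟨y, interior_subset h1, rfl⟩
      · exact absurd ⟨y, h1, rfl⟩ h
  rw [hkey]
  exact (hfr.preimage continuous_subtype_val).isOpen_compl
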